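/- Let k be an odd integer with k ≥ 3, and let X, Y, Z, W be rational numbers with X^k + Y^k = Z^k + W^k, ZW ≠ 0, and suppose W/Z = λ^2 for some nonzero rational λ. Define a = (X^k − W^k)/(λ^k Z^k), b = −λ^k, c = (Y^k − W^k)/(λ^k Z^k), d = λ^{−k}. Then ab + 1 = (Y/Z)^k, ac + 1 = (XY/(ZW))^k, ad + 1 = (X/W)^k, bc + 1 = (X/Z)^k, bd + 1 = 0, and cd + 1 = (Y/W)^k. -/

import Mathlib

theorem fermat_euler_odd_identities
    (k : ℕ) (hk : 3 ≤ k) (hodd : Odd k)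
    (X Y Z W : ℚ) (hE : X ^ k + Y ^ k = Z ^ k + W ^ k) (hZW : Z * W ≠ 0)
    (lam : ℚ) (hlam : lam ≠ 0) (hsq : W / Z = lam ^ 2)
    (a b c d : ℚ)
    (ha : a = (X ^ k - W ^ k) / (lam ^ k * Z ^ k))
    (hb : b = -lam ^ k)
    (hc : c = (Y ^ k - W ^ k) / (lam ^ k * Z ^ k))
    (hd : d = (lam ^ k)⁻¹) :
    a * b + 1 = (Y / Z) ^ k ∧
    a * c + 1 = (X * Y / (Z * W)) ^ k ∧
    a * d + 1 = (X / W) ^ k ∧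
    b * c + 1 = (X / Z) ^ k ∧
    b * d + 1 = 0 ∧
    c * d + 1 = (Y / W) ^ k := by
  have hZ : Z ≠ 0 := fun h => hZW (by simp [h])
  have hW : W ≠ 0 := fun h => hZW (by simp [h])
  have hWZ : W = lam ^ 2 * Z := by
    field_simp at hsq; linarith [hsq]
  have hWk : W ^ k = (lam ^ k) ^ 2 * Z ^ k := by
    rw [hWZ, mul_pow, ← pow_mul, ← pow_mul, Nat.mul_comm]
  have hZk : Z ^ k ≠ 0 := pow_ne_zero _ hZ
  have hWkne : W ^ k ≠ 0 := pow_ne_zero _ hW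
  have hLk : lam ^ k ≠ 0 := pow_ne_zero _ hlam
  have hq : Y ^ k = Z ^ k + (lam ^ k) ^ 2 * Z ^ k - X ^ k := by
    rw [← hWk]; linarith
  subst ha hb hc hd
  refine ⟨?_, ?_, ?_, ?_, ?_, ?_⟩
  · rw [div_pow, hq, hWk]; field_simp; ring
  · rw [div_pow, mul_pow, mul_pow, hq, hWk]; field_simp; ring
  · rw [div_pow, hWk]; field_simp; ring
  · rw [div_pow, hq, hWk]; field_simp; ring
  · field_simp; ring
  · rw [div_pow, hq, hWk]; field_simp; ring
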